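/- Let R = ℤ[u]/(u^(N+1)), let m be an integer, let ε_m : R → R be the ring homomorphism with ε_m(u) = -u·(1+mu)^(-1), and for n ∈ ℤ define i_{n,m}(α) = (1+mu)^n · ε_m(α). Then for β = ∑_{j=0}^{N} β_j u^j with β_j ∈ ℤ, the u^i-coefficient of i_{n,m}(β) equals ∑_{j=0}^{i} (-1)^j · binom(n-j, i-j) · m^(i-j) · β_j, where binom(a, b) for a ∈ ℤ, b ∈ ℕ denotes the generalized (falling-factorial) binomial coefficient a(a-1)⋯(a-b+1)/b!. -/

import Mathlib

open Polynomial Finset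

/-- `R = ℤ[u]/(u^(N+1))`, the Chow group of `ℙ^N`. -/
abbrev ChowPN (N : ℕ) : Type _ :=
  Polynomial ℤ ⧸ Ideal.span {(X : Polynomial ℤ) ^ (N + 1)}

section Aux

variable {A : Type*} [CommRing A]

/-- Reindexing a double sum against powers of a nilpotent element. -/
lemma reindex_aux (N : ℕ) (w : A) (hN : w ^ (N + 1) = 0) (f : ℕ → ℕ → A) :
    ∑ j ∈ Finset.range (N + 1), ∑ k ∈ Finset.range (N + 1), f j k * w ^ (j + k)
      = ∑ i ∈ Finset.range (N + 1), ∑ j ∈ Finset.range (i + 1), f j (i - j) * w ^ i := by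
  rw [← Finset.sum_product']
  rw [← Finset.sum_filter_add_sum_filter_not _ (fun p : ℕ × ℕ => p.1 + p.2 ≤ N)]
  have h2 : ∑ p ∈ (Finset.range (N+1) ×ˢ Finset.range (N+1)).filter
      (fun p : ℕ × ℕ => ¬ p.1 + p.2 ≤ N), f p.1 p.2 * w ^ (p.1 + p.2) = 0 := by
    apply Finset.sum_eq_zero
    intro p hp
    simp only [Finset.mem_filter, not_le] at hp
    have hle : N + 1 ≤ p.1 + p.2 := hp.2
    have hz : w ^ (p.1 + p.2) = 0 := by
      calc w ^ (p.1 + p.2) = w ^ (N + 1) * w ^ (p.1 + p.2 - (N + 1)) := by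
            rw [← pow_add, Nat.add_sub_cancel' hle]
        _ = 0 := by rw [hN, zero_mul]
    rw [hz, mul_zero]
  rw [h2, add_zero]
  rw [Finset.sum_sigma' (Finset.range (N+1)) (fun i => Finset.range (i+1))
      (fun i j => f j (i - j) * w ^ i)]
  refine Finset.sum_nbij' (fun p => ⟨p.1 + p.2, p.1⟩)
    (fun q => (q.2, q.1 - q.2)) ?_ ?_ ?_ ?_ ?_
  · intro p hp
    simp only [Finset.mem_filter, Finset.mem_product, Finset.mem_range] at hp
    simp only [Finset.mem_sigma, Finset.mem_range]
    exact ⟨Nat.lt_succ_of_le hp.2, Nat.lt_succ_of_le (Nat.le_add_right _ _)⟩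
  · intro q hq
    simp only [Finset.mem_sigma, Finset.mem_range] at hq
    simp only [Finset.mem_filter, Finset.mem_product, Finset.mem_range]
    have h1 : q.2 ≤ q.1 := Nat.lt_succ_iff.mp hq.2
    refine ⟨⟨lt_of_le_of_lt h1 hq.1, lt_of_le_of_lt (Nat.sub_le _ _) hq.1⟩, ?_⟩
    rw [Nat.add_sub_cancel' h1]
    exact Nat.lt_succ_iff.mp hq.1
  · intro p _; simp
  · intro q hq
    simp only [Finset.mem_sigma, Finset.mem_range] at hq
    have h1 : q.2 ≤ q.1 := Nat.lt_succ_iff.mp hq.2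
    simp [Nat.add_sub_cancel' h1]
  · intro p hp
    simp only [Finset.mem_filter, Finset.mem_product, Finset.mem_range] at hp
    simp

/-- Expansion of integer powers of `1 + m w` for `w` nilpotent. -/
lemma zpow_expand_aux (N : ℕ) (m : ℤ) (w : A) (hw : w ^ (N + 1) = 0)
    (v : Aˣ) (hv : (v : A) = 1 + (m : A) * w) (z : ℤ) :
    ((v ^ z : Aˣ) : A)
      = ∑ k ∈ Finset.range (N + 1), ((Ring.choose z k * m ^ k : ℤ) : A) * w ^ k := by
  have hstep : ∀ z : ℤ,
      (∑ k ∈ Finset.range (N + 1), ((Ring.choose z k * m ^ k : ℤ) : A) * w ^ k) * (v : A)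
        = ∑ k ∈ Finset.range (N + 1), ((Ring.choose (z+1) k * m ^ k : ℤ) : A) * w ^ k := by
    intro z
    rw [hv, mul_add, mul_one]
    have h1 : (∑ k ∈ Finset.range (N + 1),
          ((Ring.choose z k * m ^ k : ℤ) : A) * w ^ k) * ((m : A) * w)
        = ∑ k ∈ Finset.range (N + 1),
            ((Ring.choose z k * m ^ (k+1) : ℤ) : A) * w ^ (k+1) := by
      rw [Finset.sum_mul]
      apply Finset.sum_congr rfl
      intro k _
      push_cast
      ring
    rw [h1]
    rw [Finset.sum_range_succ (fun k => ((Ring.choose z k * m ^ (k+1) : ℤ) : A) * w ^ (k+1))]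
    rw [hw, mul_zero, add_zero]
    rw [Finset.sum_range_succ' (fun k => ((Ring.choose z k * m ^ k : ℤ) : A) * w ^ k)]
    rw [Finset.sum_range_succ' (fun k => ((Ring.choose (z+1) k * m ^ k : ℤ) : A) * w ^ k)]
    rw [add_right_comm, ← Finset.sum_add_distrib]
    congr 1
    · apply Finset.sum_congr rfl
      intro k _
      have hc : Ring.choose (z + 1) (k + 1) = Ring.choose z k + Ring.choose z (k + 1) :=
        Ring.choose_succ_succ z k
      rw [hc]
      push_cast
      ring
    · simp [Ring.choose_zero_right]
  induction z using Int.induction_on with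
  | zero =>
      rw [Finset.sum_range_succ' (fun k => ((Ring.choose (0:ℤ) k * m ^ k : ℤ) : A) * w ^ k)]
      simp [Ring.choose_zero_succ, Ring.choose_zero_right]
  | succ k ih =>
      have h : ((v ^ ((k:ℤ)+1) : Aˣ) : A) = ((v ^ (k:ℤ) : Aˣ) : A) * (v : A) := by
        rw [zpow_add_one, Units.val_mul]
      rw [h, ih, hstep]
  | pred k ih =>
      have hz : (-(k:ℤ) - 1) + 1 = -(k:ℤ) := by ring
      have h2 : ((v ^ (-(k:ℤ)-1) : Aˣ) : A) * (v : A)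
          = (∑ j ∈ Finset.range (N + 1),
              ((Ring.choose (-(k:ℤ)-1) j * m ^ j : ℤ) : A) * w ^ j) * (v : A) := by
        rw [← Units.val_mul, ← zpow_add_one, hz, ih, hstep, hz]
      have hinv := congrArg (fun x => x * ((v⁻¹ : Aˣ) : A)) h2
      simpa [mul_assoc] using hinv

end Aux

theorem stmt_10 (N : ℕ) (n m : ℤ)
    (u : ChowPN N) (hu : u = Ideal.Quotient.mk _ X)
    (v : (ChowPN N)ˣ) (hv : (v : ChowPN N) = 1 + (m : ChowPN N) * u)
    (ε : ChowPN N →+* ChowPN N)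
    (hε : ε u = -u * ((v⁻¹ : (ChowPN N)ˣ) : ChowPN N))
    (β : ℕ → ℤ) :
    ((v ^ n : (ChowPN N)ˣ) : ChowPN N) * ε (∑ j ∈ Finset.range (N + 1), β j • u ^ j)
      = ∑ i ∈ Finset.range (N + 1),
          (∑ j ∈ Finset.range (i + 1),
            (-1 : ℤ) ^ j * Ring.choose (n - (j : ℤ)) (i - j) * m ^ (i - j) * β j) • u ^ i := by
  have hu0 : u ^ (N + 1) = 0 := by
    rw [hu, ← map_pow, Ideal.Quotient.eq_zero_iff_mem]
    exact Ideal.subset_span rfl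
  have key : ∀ z : ℤ, ((v ^ z : (ChowPN N)ˣ) : ChowPN N)
      = ∑ k ∈ Finset.range (N + 1), ((Ring.choose z k * m ^ k : ℤ) : ChowPN N) * u ^ k :=
    zpow_expand_aux N m u hu0 v hv
  have hLHS : ((v ^ n : (ChowPN N)ˣ) : ChowPN N)
        * ε (∑ j ∈ Finset.range (N + 1), β j • u ^ j)
      = ∑ j ∈ Finset.range (N + 1), ∑ k ∈ Finset.range (N + 1),
          (((-1 : ℤ) ^ j * Ring.choose (n - (j:ℤ)) k * m ^ k * β j : ℤ) : ChowPN N)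
            * u ^ (j + k) := by
    rw [map_sum, Finset.mul_sum]
    apply Finset.sum_congr rfl
    intro j _
    have hεj : ε (β j • u ^ j) = β j • ((-u) * ((v⁻¹ : (ChowPN N)ˣ) : ChowPN N)) ^ j := by
      rw [map_zsmul, map_pow, hε]
    rw [hεj]
    have hvv : ((v ^ n : (ChowPN N)ˣ) : ChowPN N) * ((v⁻¹ : (ChowPN N)ˣ) : ChowPN N) ^ j
        = ((v ^ (n - (j:ℤ)) : (ChowPN N)ˣ) : ChowPN N) := by
      rw [← Units.val_pow_eq_pow_val, ← Units.val_mul]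
      congr 1
      rw [inv_pow, ← zpow_natCast, ← zpow_neg, ← zpow_add, sub_eq_add_neg]
    have hexp : ((v ^ n : (ChowPN N)ˣ) : ChowPN N)
          * (β j • ((-u) * ((v⁻¹ : (ChowPN N)ˣ) : ChowPN N)) ^ j)
        = ((((-1:ℤ)^j * β j : ℤ)) : ChowPN N) * u ^ j
            * ((v ^ (n - (j:ℤ)) : (ChowPN N)ˣ) : ChowPN N) := by
      rw [← hvv, mul_pow, zsmul_eq_mul]
      push_cast
      ring
    rw [hexp, key, Finset.mul_sum]
    apply Finset.sum_congr rfl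
    intro k _
    push_cast
    ring
  rw [hLHS]
  rw [reindex_aux N u hu0
    (fun j k => (((-1 : ℤ) ^ j * Ring.choose (n - (j:ℤ)) k * m ^ k * β j : ℤ) : ChowPN N))]
  apply Finset.sum_congr rfl
  intro i _
  rw [zsmul_eq_mul, Int.cast_sum, Finset.sum_mul]
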